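/- Let G = (V,E) be a DAG and suppose nodes i and j are d-connected given S ⊆ V\{i,j}. Then there exist Λ ∈ ℝ^E and ω ∈ (0,∞)^V with all ω-entries equal (ω_k = 1 for all k) such that the covariance matrix Σ = (I−Λ)^{-T} diag(ω)(I−Λ)^{-1} satisfies det(Σ_{{i}∪S,{j}∪S}) ≠ 0. (In particular, d-separation is complete even under the full equal variance assumption.) -/

import Mathlib

open Matrix

/-- `i` and `j` are d-connected given `S` in the directed graph `E`: there is a path
`v 0 = i, …, v n = j` whose consecutive vertices are adjacent (in either direction),
such that every interior collider lies in `S` and every interior non-collider lies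
outside `S`. -/
def DConnected {V : Type*} (E : V → V → Prop) (S : Finset V) (i j : V) : Prop :=
  ∃ (n : ℕ) (v : ℕ → V), 0 < n ∧ v 0 = i ∧ v n = j ∧
    (∀ t < n, E (v t) (v (t + 1)) ∨ E (v (t + 1)) (v t)) ∧
    (∀ t, 0 < t → t < n →
      ((E (v (t - 1)) (v t) ∧ E (v (t + 1)) (v t)) → v t ∈ S) ∧
      (¬(E (v (t - 1)) (v t) ∧ E (v (t + 1)) (v t)) → v t ∉ S))


namespace Stmt10Aux

open Relation

variable {V : Type*} [Fintype V] [DecidableEq V]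

set_option linter.unusedSectionVars false

open Classical in
/-- The weight matrix with entry 1 on edges of `F`. -/
noncomputable def lam (F : V → V → Prop) : Matrix V V ℝ :=
  Matrix.of fun a b => if F a b then (1 : ℝ) else 0

lemma lam_nonneg (F : V → V → Prop) (a b : V) : 0 ≤ lam F a b := by
  simp only [lam, Matrix.of_apply]
  split <;> norm_num

lemma lam_ne_zero {F : V → V → Prop} {a b : V} (h : lam F a b ≠ 0) : F a b := by
  by_contra hc
  simp only [lam, Matrix.of_apply, if_neg hc] at h
  exact h rfl

lemma lam_apply_of {F : V → V → Prop} {a b : V} (h : F a b) : lam F a b = 1 := by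
  simp only [lam, Matrix.of_apply]
  rw [if_pos h]

lemma lam_pow_nonneg (F : V → V → Prop) (m : ℕ) (a b : V) : 0 ≤ (lam F ^ m) a b := by
  induction m generalizing a b with
  | zero =>
    rw [pow_zero, Matrix.one_apply]
    split <;> norm_num
  | succ m ih =>
    rw [pow_succ', Matrix.mul_apply]
    exact Finset.sum_nonneg fun c _ => mul_nonneg (lam_nonneg F a c) (ih c b)

lemma lam_pow_path {F : V → V → Prop} {m : ℕ} {a b : V} (h : (lam F ^ m) a b ≠ 0) :
    ∃ f : ℕ → V, f 0 = a ∧ f m = b ∧ ∀ t < m, F (f t) (f (t + 1)) := by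
  induction m generalizing a with
  | zero =>
    have hab : a = b := by
      by_contra hne
      rw [pow_zero, Matrix.one_apply_ne hne] at h
      exact h rfl
    exact ⟨fun _ => a, rfl, hab, fun t ht => absurd ht (by omega)⟩
  | succ m ih =>
    rw [pow_succ', Matrix.mul_apply] at h
    obtain ⟨c, _, hc⟩ := Finset.exists_ne_zero_of_sum_ne_zero h
    rcases mul_ne_zero_iff.mp hc with ⟨h1, h2⟩
    obtain ⟨f, hf0, hfm, hfs⟩ := ih h2
    refine ⟨fun t => if t = 0 then a else f (t - 1), by simp, by simp [hfm], ?_⟩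
    intro t ht
    rcases Nat.eq_zero_or_pos t with h0 | h0
    · subst h0
      simpa [hf0] using lam_ne_zero h1
    · have h1t : ¬ (t = 0) := by omega
      have h2t : ¬ (t + 1 = 0) := by omega
      simp only [if_neg h1t, if_neg h2t]
      have : t - 1 + 1 = t + 1 - 1 := by omega
      rw [show t + 1 - 1 = t - 1 + 1 by omega]
      exact hfs (t - 1) (by omega)

lemma transGen_of_chain {F : V → V → Prop} (f : ℕ → V) (a b : ℕ) (hab : a < b)
    (hstep : ∀ t, a ≤ t → t < b → F (f t) (f (t + 1))) :
    Relation.TransGen F (f a) (f b) := by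
  revert hstep
  induction b, hab using Nat.le_induction with
  | base => intro hstep; exact TransGen.single (hstep a le_rfl (by omega))
  | succ n hn ih =>
    intro hstep
    exact (ih fun t ht ht' => hstep t ht (by omega)).tail (hstep n (by omega) (by omega))

lemma rt_of_path {F : V → V → Prop} {m : ℕ} {a b : V} (f : ℕ → V)
    (hf0 : f 0 = a) (hfm : f m = b) (hfs : ∀ t < m, F (f t) (f (t + 1))) :
    Relation.ReflTransGen F a b := by
  rcases Nat.eq_zero_or_pos m with h0 | h0
  · subst h0; rw [← hf0, ← hfm]
  · rw [← hf0, ← hfm]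
    exact (transGen_of_chain f 0 m h0 fun t _ ht => hfs t ht).to_reflTransGen

lemma lam_pow_nilpotent {E F : V → V → Prop} (hacyc : ∀ i, ¬ Relation.TransGen E i i)
    (hFE : ∀ a b, F a b → E a b) :
    lam F ^ (Fintype.card V + 1) = 0 := by
  ext a b
  rw [Matrix.zero_apply]
  by_contra h
  obtain ⟨f, hf0, hfm, hfs⟩ := lam_pow_path h
  obtain ⟨p, q, hpq, hfpq⟩ := Fintype.exists_ne_map_eq_of_card_lt
    (fun t : Fin (Fintype.card V + 2) => f t) (by simp)
  have key : ∀ p q : Fin (Fintype.card V + 2), (p : ℕ) < (q : ℕ) → f p = f q → False := by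
    intro p q hlt heq
    have htg : Relation.TransGen F (f (p : ℕ)) (f (q : ℕ)) :=
      transGen_of_chain f p q hlt fun t ht ht' => hfs t (by have := q.isLt; omega)
    rw [heq] at htg
    exact hacyc (f (q : ℕ)) (Relation.TransGen.mono hFE _ _ htg)
  have hvne : (p : ℕ) ≠ (q : ℕ) := fun hv => hpq (Fin.ext hv)
  rcases hvne.lt_or_gt with hlt | hlt
  · exact key p q hlt hfpq
  · exact key q p hlt hfpq.symm

/-- `N = (1-Λ)⁻¹`, as an explicit geometric sum. -/
noncomputable def NN (F : V → V → Prop) : Matrix V V ℝ :=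
  ∑ m ∈ Finset.range (Fintype.card V + 1), lam F ^ m

lemma NN_mul_one_sub {E F : V → V → Prop} (hacyc : ∀ i, ¬ Relation.TransGen E i i)
    (hFE : ∀ a b, F a b → E a b) :
    NN F * (1 - lam F) = 1 := by
  have h := geom_sum_mul (lam F) (Fintype.card V + 1)
  rw [lam_pow_nilpotent hacyc hFE, zero_sub] at h
  have h2 : NN F * (lam F - 1) = -1 := h
  calc NN F * (1 - lam F) = -(NN F * (lam F - 1)) := by
        rw [← Matrix.mul_neg, neg_sub]
    _ = 1 := by rw [h2, neg_neg]

lemma inv_one_sub_lam {E F : V → V → Prop} (hacyc : ∀ i, ¬ Relation.TransGen E i i)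
    (hFE : ∀ a b, F a b → E a b) :
    (1 - lam F)⁻¹ = NN F :=
  Matrix.inv_eq_left_inv (NN_mul_one_sub hacyc hFE)

lemma NN_nonneg (F : V → V → Prop) (a b : V) : 0 ≤ NN F a b := by
  rw [NN, Matrix.sum_apply]
  exact Finset.sum_nonneg fun m _ => lam_pow_nonneg F m a b

lemma NN_support {F : V → V → Prop} {a b : V} (h : NN F a b ≠ 0) :
    Relation.ReflTransGen F a b := by
  rw [NN, Matrix.sum_apply] at h
  obtain ⟨m, _, hm⟩ := Finset.exists_ne_zero_of_sum_ne_zero h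
  obtain ⟨f, hf0, hfm, hfs⟩ := lam_pow_path hm
  exact rt_of_path f hf0 hfm hfs

lemma NN_pos {E F : V → V → Prop} (hacyc : ∀ i, ¬ Relation.TransGen E i i)
    (hFE : ∀ a b, F a b → E a b) {a b : V} (h : Relation.ReflTransGen F a b) :
    0 < NN F a b := by
  have key : ∃ m, 0 < (lam F ^ m) a b := by
    induction h with
    | refl => exact ⟨0, by rw [pow_zero, Matrix.one_apply_eq]; norm_num⟩
    | tail hab hbc ih =>
      obtain ⟨m, hm⟩ := ih
      refine ⟨m + 1, ?_⟩
      rw [pow_succ, Matrix.mul_apply]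
      rename_i b' c'
      have hterm : 0 < (lam F ^ m) a b' * lam F b' c' := by
        rw [lam_apply_of hbc, mul_one]; exact hm
      calc (0:ℝ) < (lam F ^ m) a b' * lam F b' c' := hterm
        _ ≤ ∑ w, (lam F ^ m) a w * lam F w c' :=
          Finset.single_le_sum
            (fun w _ => mul_nonneg (lam_pow_nonneg F m a w) (lam_nonneg F w c'))
            (Finset.mem_univ b')
  obtain ⟨m, hm⟩ := key
  have hmlt : m < Fintype.card V + 1 := by
    by_contra hge
    have : lam F ^ m = 0 := by
      rw [show m = (Fintype.card V + 1) + (m - (Fintype.card V + 1)) by omega, pow_add,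
        lam_pow_nilpotent hacyc hFE, zero_mul]
    rw [this, Matrix.zero_apply] at hm
    exact lt_irrefl 0 hm
  calc (0:ℝ) < (lam F ^ m) a b := hm
    _ ≤ NN F a b := by
      rw [NN, Matrix.sum_apply]
      exact Finset.single_le_sum (fun w _ => lam_pow_nonneg F w a b)
        (Finset.mem_range.mpr hmlt)

lemma NN_diag {E F : V → V → Prop} (hacyc : ∀ i, ¬ Relation.TransGen E i i)
    (hFE : ∀ a b, F a b → E a b) (a : V) : NN F a a = 1 := by
  rw [NN, Matrix.sum_apply]
  rw [Finset.sum_eq_single_of_mem 0 (Finset.mem_range.mpr (by omega))]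
  · rw [pow_zero, Matrix.one_apply_eq]
  · intro m _ hm
    by_contra h
    obtain ⟨f, hf0, hfm, hfs⟩ := lam_pow_path h
    have : Relation.TransGen F (f 0) (f m) :=
      transGen_of_chain f 0 m (by omega) fun t _ ht => hfs t ht
    rw [hf0, hfm] at this
    exact hacyc a (Relation.TransGen.mono hFE _ _ this)

lemma NN_sink {F : V → V → Prop} {a : V} (hs : ∀ c, ¬ F a c) (b : V) :
    NN F a b = if a = b then 1 else 0 := by
  rw [NN, Matrix.sum_apply]
  rw [Finset.sum_eq_single_of_mem 0 (Finset.mem_range.mpr (by omega))]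
  · rw [pow_zero, Matrix.one_apply]
  · intro m _ hm
    obtain ⟨m', rfl⟩ : ∃ m', m = m' + 1 := ⟨m - 1, by omega⟩
    rw [pow_succ', Matrix.mul_apply]
    apply Finset.sum_eq_zero
    intro c _
    have hz : lam F a c = 0 := by
      simp only [lam, Matrix.of_apply]
      rw [if_neg (hs c)]
    rw [hz, zero_mul]

lemma NN_noin {F : V → V → Prop} {b : V} (hs : ∀ c, ¬ F c b) {a : V} (hab : a ≠ b) :
    NN F a b = 0 := by
  by_contra h
  rcases (NN_support h).cases_tail with he | ⟨c, _, hcb⟩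
  · exact hab he.symm
  · exact hs c hcb

lemma M_zero {F : V → V → Prop} {u v : V}
    (h : ¬ ∃ t, Relation.ReflTransGen F t u ∧ Relation.ReflTransGen F t v) :
    ∑ w, NN F w u * NN F w v = 0 := by
  apply Finset.sum_eq_zero
  intro w _
  by_contra hc
  rcases mul_ne_zero_iff.mp hc with ⟨h1, h2⟩
  exact h ⟨w, NN_support h1, NN_support h2⟩

lemma M_pos {E F : V → V → Prop} (hacyc : ∀ i, ¬ Relation.TransGen E i i)
    (hFE : ∀ a b, F a b → E a b) {u v : V}
    (h : ∃ t, Relation.ReflTransGen F t u ∧ Relation.ReflTransGen F t v) :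
    0 < ∑ w, NN F w u * NN F w v := by
  obtain ⟨t, h1, h2⟩ := h
  calc (0:ℝ) < NN F t u * NN F t v :=
        mul_pos (NN_pos hacyc hFE h1) (NN_pos hacyc hFE h2)
    _ ≤ ∑ w, NN F w u * NN F w v :=
      Finset.single_le_sum
        (fun w _ => mul_nonneg (NN_nonneg F w u) (NN_nonneg F w v))
        (Finset.mem_univ t)

end Stmt10Aux


namespace Stmt10Aux2

open Relation

set_option linter.unusedSectionVars false
set_option maxHeartbeats 800000

variable {V : Type*} [Fintype V] [DecidableEq V]

def SkelAt (E : V → V → Prop) (S : Finset V) (i j : V) (k : ℕ) : Prop :=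
  ∃ (x : ℕ → V) (F : V → V → Prop),
    x 0 = i ∧ x k = j ∧ (∀ ℓ, 0 < ℓ → ℓ < k → x ℓ ∈ S) ∧
    (∀ a b, F a b → E a b) ∧ (∀ a b, F a b → a ∉ S) ∧
    (∀ a b, F a b → b ∈ S → ∃ ℓ, 0 < ℓ ∧ ℓ < k ∧ x ℓ = b) ∧
    (∀ ℓ, ℓ < k → ∃ t, Relation.ReflTransGen F t (x ℓ) ∧ Relation.ReflTransGen F t (x (ℓ + 1)))

lemma rt_restrict {S : Finset V} (F : V → V → Prop) (G : V → Prop)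
    (hH1 : ∀ p q, F p q → p ∉ S)
    {t z : V} (h : Relation.ReflTransGen F t z) (hz : z ∈ S → G z) :
    Relation.ReflTransGen (fun p q => F p q ∧ (q ∈ S → G q)) t z := by
  induction h with
  | refl => exact Relation.ReflTransGen.refl
  | tail h₁ h₂ ih =>
    exact (ih fun hbS => absurd hbS (hH1 _ _ h₂)).tail ⟨h₂, hz⟩

lemma skel_shorten {E : V → V → Prop} {S : Finset V} {i j : V} {k : ℕ}
    (hiS : i ∉ S) (hjS : j ∉ S)
    (x : ℕ → V) (F : V → V → Prop)
    (hx0 : x 0 = i) (hxk : x k = j) (hxS : ∀ ℓ, 0 < ℓ → ℓ < k → x ℓ ∈ S)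
    (hFE : ∀ a b, F a b → E a b) (hH1 : ∀ a b, F a b → a ∉ S)
    (hA : ∀ ℓ, ℓ < k → ∃ t, Relation.ReflTransGen F t (x ℓ) ∧ Relation.ReflTransGen F t (x (ℓ + 1)))
    (a m : ℕ) (ham : a + 2 ≤ m) (hmk : m ≤ k)
    (hw : ∃ t, Relation.ReflTransGen F t (x a) ∧ Relation.ReflTransGen F t (x m)) :
    SkelAt E S i j (k - (m - a - 1)) := by
  set d := m - a - 1 with hd
  set k' := k - d with hk'
  have hdm : a + 1 + d = m := by omega
  have hkk : k' + d = k := by omega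
  have hak : a + 1 ≤ k' := by omega
  set x' : ℕ → V := fun ℓ => if ℓ ≤ a then x ℓ else x (ℓ + d) with hx'
  set G : V → Prop := fun q => ∃ ℓ, 0 < ℓ ∧ ℓ < k' ∧ x' ℓ = q with hG
  set F' : V → V → Prop := fun p q => F p q ∧ (q ∈ S → G q) with hF'
  have hx'0 : x' 0 = i := by
    simp only [hx', if_pos (Nat.zero_le a)]; exact hx0
  have hx'k : x' k' = j := by
    simp only [hx']
    rw [if_neg (by omega), hkk, hxk]
  have hend : ∀ ℓ, ℓ ≤ k' → (x' ℓ ∈ S → G (x' ℓ)) := by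
    intro ℓ hℓ hmem
    rcases Nat.eq_zero_or_pos ℓ with h0 | h0
    · exfalso; rw [h0, hx'0] at hmem; exact hiS hmem
    rcases eq_or_lt_of_le hℓ with he | hlt
    · exfalso; rw [he, hx'k] at hmem; exact hjS hmem
    · exact ⟨ℓ, h0, hlt, rfl⟩
  refine ⟨x', F', hx'0, hx'k, ?_, ?_, ?_, ?_, ?_⟩
  · -- interior in S
    intro ℓ h0 hℓ
    simp only [hx']
    split_ifs with hla
    · exact hxS ℓ h0 (by omega)
    · exact hxS (ℓ + d) (by omega) (by omega)
  · exact fun p q hf => hFE p q hf.1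
  · exact fun p q hf => hH1 p q hf.1
  · exact fun p q hf hq => hf.2 hq
  · -- connections
    intro ℓ hℓ
    rcases lt_trichotomy ℓ a with hlt | heq | hgt
    · obtain ⟨t, h1, h2⟩ := hA ℓ (by omega)
      have e1 : x' ℓ = x ℓ := by simp only [hx', if_pos (by omega : ℓ ≤ a)]
      have e2 : x' (ℓ + 1) = x (ℓ + 1) := by simp only [hx', if_pos (by omega : ℓ + 1 ≤ a)]
      refine ⟨t, ?_, ?_⟩
      · rw [e1]; exact rt_restrict F G hH1 h1 (by rw [← e1]; exact hend ℓ (by omega))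
      · rw [e2]; exact rt_restrict F G hH1 h2 (by rw [← e2]; exact hend (ℓ + 1) (by omega))
    · obtain ⟨t, h1, h2⟩ := hw
      have e1 : x' ℓ = x a := by rw [heq]; simp only [hx', if_pos (le_refl a)]
      have e2 : x' (ℓ + 1) = x m := by
        simp only [hx']
        rw [if_neg (by omega), heq, hdm]
      refine ⟨t, ?_, ?_⟩
      · rw [e1]; exact rt_restrict F G hH1 h1 (by rw [← e1]; exact hend ℓ (by omega))
      · rw [e2]; exact rt_restrict F G hH1 h2 (by rw [← e2]; exact hend (ℓ + 1) (by omega))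
    · obtain ⟨t, h1, h2⟩ := hA (ℓ + d) (by omega)
      have e1 : x' ℓ = x (ℓ + d) := by simp only [hx']; rw [if_neg (by omega)]
      have e2 : x' (ℓ + 1) = x (ℓ + d + 1) := by
        simp only [hx']; rw [if_neg (by omega)]
        congr 1; omega
      refine ⟨t, ?_, ?_⟩
      · rw [e1]; exact rt_restrict F G hH1 h1 (by rw [← e1]; exact hend ℓ (by omega))
      · rw [e2]; exact rt_restrict F G hH1 h2 (by rw [← e2]; exact hend (ℓ + 1) (by omega))

lemma exists_good_skel {E : V → V → Prop} {S : Finset V} {i j : V}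
    (hij : i ≠ j) (hiS : i ∉ S) (hjS : j ∉ S)
    (hex : ∃ k, SkelAt E S i j k) :
    ∃ (k : ℕ) (x : ℕ → V) (F : V → V → Prop),
      0 < k ∧ x 0 = i ∧ x k = j ∧ (∀ ℓ, 0 < ℓ → ℓ < k → x ℓ ∈ S) ∧
      (∀ a b, F a b → E a b) ∧ (∀ a b, F a b → a ∉ S) ∧
      (∀ a b, F a b → b ∈ S → ∃ ℓ, 0 < ℓ ∧ ℓ < k ∧ x ℓ = b) ∧
      (∀ ℓ, ℓ < k → ∃ t, Relation.ReflTransGen F t (x ℓ) ∧ Relation.ReflTransGen F t (x (ℓ + 1))) ∧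
      (∀ a b, a ≤ k → b ≤ k → x a = x b → a = b) ∧
      (∀ r c, r + 2 ≤ c → c ≤ k →
        ¬ ∃ t, Relation.ReflTransGen F t (x r) ∧ Relation.ReflTransGen F t (x c)) := by
  classical
  obtain ⟨x, F, hx0, hxk, hxS, hFE, hH1, hH2, hA⟩ := Nat.find_spec hex
  set k := Nat.find hex with hkdef
  have hmin : ∀ k', k' < k → ¬ SkelAt E S i j k' := fun k' h => Nat.find_min hex h
  have hk : 0 < k := by
    rcases Nat.eq_zero_or_pos k with h0 | h0
    · exfalso; apply hij; rw [← hx0, ← hxk, h0]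
    · exact h0
  have hnd : ∀ a b, a < b → b ≤ k → x a = x b → False := by
    intro a b hab hbk heq
    rcases eq_or_lt_of_le hbk with hbeq | hblt
    · rcases Nat.eq_zero_or_pos a with ha0 | ha0
      · apply hij; rw [← hx0, ← hxk, ← ha0, ← hbeq, heq]
      · apply hjS; rw [← hxk, ← hbeq, ← heq]; exact hxS a ha0 (by omega)
    · obtain ⟨t, h1, h2⟩ := hA b hblt
      have hs := skel_shorten hiS hjS x F hx0 hxk hxS hFE hH1 hA a (b + 1)
        (by omega) (by omega) ⟨t, by rw [heq]; exact h1, h2⟩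
      exact hmin _ (by omega) hs
  have hB : ∀ r c, r + 2 ≤ c → c ≤ k →
      ¬ ∃ t, Relation.ReflTransGen F t (x r) ∧ Relation.ReflTransGen F t (x c) := by
    rintro r c hrc hck ⟨t, h1, h2⟩
    have hs := skel_shorten hiS hjS x F hx0 hxk hxS hFE hH1 hA r c hrc hck ⟨t, h1, h2⟩
    exact hmin _ (by omega) hs
  refine ⟨k, x, F, hk, hx0, hxk, hxS, hFE, hH1, hH2, hA, ?_, hB⟩
  intro a b hak hbk heq
  rcases lt_trichotomy a b with h | h | h
  · exact absurd heq (fun he => hnd a b h hbk he)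
  · exact h
  · exact absurd heq.symm (fun he => hnd b a h hak he)

end Stmt10Aux2


namespace Stmt10Aux3

open Relation

set_option linter.unusedSectionVars false
set_option maxHeartbeats 1600000

variable {V : Type*}

def IsColl (E : V → V → Prop) (v : ℕ → V) (t : ℕ) : Prop :=
  E (v (t - 1)) (v t) ∧ E (v (t + 1)) (v t)

open Classical in
noncomputable def posNext (E : V → V → Prop) (v : ℕ → V) (n p : ℕ) : ℕ :=
  if h : ∃ t, p < t ∧ t < n ∧ IsColl E v t then Nat.find h else n

noncomputable def wpos (E : V → V → Prop) (v : ℕ → V) (n : ℕ) : ℕ → ℕ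
  | 0 => 0
  | ℓ + 1 => posNext E v n (wpos E v n ℓ)

variable {E : V → V → Prop} {v : ℕ → V} {n : ℕ}

lemma posNext_le (p : ℕ) (hn : p ≤ n) : posNext E v n p ≤ n := by
  classical
  rw [posNext]
  split_ifs with h
  · exact (Nat.find_spec h).2.1.le
  · exact le_rfl

lemma lt_posNext (p : ℕ) (hp : p < n) : p < posNext E v n p := by
  classical
  rw [posNext]
  split_ifs with h
  · exact (Nat.find_spec h).1
  · exact hp

lemma posNext_nocoll {p t : ℕ} (hpt : p < t) (htp : t < posNext E v n p) :
    ¬ (t < n ∧ IsColl E v t) := by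
  classical
  rw [posNext] at htp
  split_ifs at htp with h
  · intro hc
    exact Nat.find_min h htp ⟨hpt, hc.1, hc.2⟩
  · intro hc
    exact h ⟨t, hpt, hc.1, hc.2⟩

lemma posNext_coll {p : ℕ} (hlt : posNext E v n p < n) :
    IsColl E v (posNext E v n p) ∧ p < posNext E v n p := by
  classical
  rw [posNext] at hlt ⊢
  split_ifs at hlt ⊢ with h
  · exact ⟨(Nat.find_spec h).2.2, (Nat.find_spec h).1⟩
  · exact absurd hlt (lt_irrefl n)

lemma posNext_le_coll {p q : ℕ} (hpq : p < q) (hq : q < n) (hc : IsColl E v q) :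
    posNext E v n p ≤ q := by
  classical
  rw [posNext]
  split_ifs with h
  · exact Nat.find_min' h ⟨hpq, hq, hc⟩
  · exact absurd ⟨q, hpq, hq, hc⟩ h

lemma wpos_le : ∀ ℓ, wpos E v n ℓ ≤ n := by
  intro ℓ
  induction ℓ with
  | zero => exact Nat.zero_le n
  | succ ℓ ih => exact posNext_le _ ih

lemma wpos_stab {ℓ : ℕ} (h : wpos E v n ℓ = n) : wpos E v n (ℓ + 1) = n := by
  classical
  rw [wpos, h, posNext]
  rw [dif_neg]
  rintro ⟨t, h1, h2, _⟩
  omega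

lemma wpos_stab' {ℓ m : ℕ} (h : wpos E v n ℓ = n) (hm : ℓ ≤ m) : wpos E v n m = n := by
  induction m, hm using Nat.le_induction with
  | base => exact h
  | succ m hm ih => exact wpos_stab ih

lemma wpos_reach : ∃ ℓ, wpos E v n ℓ = n := by
  have key : ∀ ℓ, wpos E v n ℓ = n ∨ ℓ ≤ wpos E v n ℓ := by
    intro ℓ
    induction ℓ with
    | zero => right; exact Nat.zero_le _
    | succ ℓ ih =>
      rcases ih with h | h
      · left; exact wpos_stab h
      · rcases eq_or_lt_of_le (wpos_le (E := E) (v := v) (n := n) ℓ) with he | hlt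
        · left; exact wpos_stab he
        · right
          have := lt_posNext (E := E) (v := v) (wpos E v n ℓ) hlt
          rw [wpos]
          omega
  rcases key n with h | h
  · exact ⟨n, h⟩
  · exact ⟨n, le_antisymm (wpos_le n) h⟩

/-- From a d-connecting walk, build a skeleton. -/
lemma skel_of_walk {S : Finset V} {i j : V}
    (hacyc : ∀ a, ¬ Relation.TransGen E a a)
    (hiS : i ∉ S) (hjS : j ∉ S)
    (hn : 0 < n) (hv0 : v 0 = i) (hvn : v n = j)
    (hedge : ∀ t < n, E (v t) (v (t + 1)) ∨ E (v (t + 1)) (v t))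
    (hcol : ∀ t, 0 < t → t < n →
      ((E (v (t - 1)) (v t) ∧ E (v (t + 1)) (v t)) → v t ∈ S) ∧
      (¬(E (v (t - 1)) (v t) ∧ E (v (t + 1)) (v t)) → v t ∉ S)) :
    ∃ (k : ℕ) (x : ℕ → V) (F : V → V → Prop),
      x 0 = i ∧ x k = j ∧ (∀ ℓ, 0 < ℓ → ℓ < k → x ℓ ∈ S) ∧
      (∀ a b, F a b → E a b) ∧ (∀ a b, F a b → a ∉ S) ∧
      (∀ a b, F a b → b ∈ S → ∃ ℓ, 0 < ℓ ∧ ℓ < k ∧ x ℓ = b) ∧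
      (∀ ℓ, ℓ < k → ∃ t, Relation.ReflTransGen F t (x ℓ) ∧
        Relation.ReflTransGen F t (x (ℓ + 1))) := by
  classical
  set FF : V → V → Prop := fun a b =>
    E a b ∧ ∃ t, t < n ∧ ((v t = a ∧ v (t + 1) = b) ∨ (v t = b ∧ v (t + 1) = a)) with hFF
  set kk := Nat.find (wpos_reach (E := E) (v := v) (n := n)) with hkk
  have hkspec : wpos E v n kk = n := Nat.find_spec (wpos_reach (E := E) (v := v) (n := n))
  have hkmin : ∀ ℓ, ℓ < kk → wpos E v n ℓ ≠ n :=
    fun ℓ h => Nat.find_min (wpos_reach (E := E) (v := v) (n := n)) h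
  have hltn : ∀ ℓ, ℓ < kk → wpos E v n ℓ < n :=
    fun ℓ h => lt_of_le_of_ne (wpos_le ℓ) (hkmin ℓ h)
  have hkpos : 0 < kk := by
    rcases Nat.eq_zero_or_pos kk with h0 | h0
    · exfalso; rw [h0] at hkspec; rw [wpos] at hkspec; omega
    · exact h0
  -- interior wpos are colliders
  have hcolpos : ∀ ℓ, 0 < ℓ → ℓ < kk →
      IsColl E v (wpos E v n ℓ) ∧ 0 < wpos E v n ℓ ∧ wpos E v n ℓ < n := by
    intro ℓ h0 hℓ
    obtain ⟨m, rfl⟩ : ∃ m, ℓ = m + 1 := ⟨ℓ - 1, by omega⟩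
    have hlt : wpos E v n (m + 1) < n := hltn _ hℓ
    have h1 : wpos E v n (m + 1) = posNext E v n (wpos E v n m) := by rw [wpos]
    rw [h1] at hlt ⊢
    obtain ⟨hic, hgt⟩ := posNext_coll hlt
    exact ⟨hic, by omega, hlt⟩
  -- every interior collider position is some wpos
  have hcover : ∀ p, 0 < p → p < n → IsColl E v p →
      ∃ ℓ, 0 < ℓ ∧ ℓ < kk ∧ wpos E v n ℓ = p := by
    intro p hp0 hpn hpc
    set P : ℕ → Prop := fun ℓ => wpos E v n ℓ < p with hP
    have hP0 : P 0 := by rw [hP]; simp only [wpos]; omega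
    set lg := Nat.findGreatest P kk with hlg
    have hspecg : P lg := Nat.findGreatest_spec (Nat.zero_le kk) hP0
    have hlgk : lg ≤ kk := Nat.findGreatest_le kk
    have hlglt : lg < kk := by
      rcases eq_or_lt_of_le hlgk with he | h
      · exfalso
        have := hspecg
        rw [hP, he, hkspec] at this
        omega
      · exact h
    have hnotP : ¬ P (lg + 1) := Nat.findGreatest_is_greatest (n := kk) (by omega) (by omega)
    have hle : wpos E v n (lg + 1) ≤ p := by
      rw [wpos]
      exact posNext_le_coll hspecg hpn hpc
    have heq : wpos E v n (lg + 1) = p := by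
      rw [hP] at hnotP
      omega
    refine ⟨lg + 1, by omega, ?_, heq⟩
    by_contra hge
    have : wpos E v n (lg + 1) = n := wpos_stab' hkspec (by omega)
    omega
  -- segment analysis
  have hseg : ∀ ℓ, ℓ < kk → ∃ t, Relation.ReflTransGen FF t (v (wpos E v n ℓ)) ∧
      Relation.ReflTransGen FF t (v (wpos E v n (ℓ + 1))) := by
    intro ℓ hℓ
    set p := wpos E v n ℓ with hp
    set q := wpos E v n (ℓ + 1) with hq
    have hpn : p < n := hltn ℓ hℓ
    have hqpos : q = posNext E v n p := by rw [hq, wpos]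
    have hpq : p < q := by rw [hqpos]; exact lt_posNext p hpn
    have hqn : q ≤ n := wpos_le _
    have hnocoll : ∀ t, p < t → t < q → ¬ (t < n ∧ IsColl E v t) := by
      intro t h1 h2
      exact posNext_nocoll h1 (by rw [← hqpos]; exact h2)
    -- find the top of the segment
    have hm : ∃ m, p ≤ m ∧ m ≤ q ∧
        (∀ t, p ≤ t → t < m → E (v (t + 1)) (v t)) ∧
        (∀ t, m ≤ t → t < q → E (v t) (v (t + 1))) := by
      by_cases h : ∃ t, p ≤ t ∧ t < q ∧ E (v t) (v (t + 1))
      · have hs1 : p ≤ Nat.find h := (Nat.find_spec h).1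
        have hs2 : Nat.find h < q := (Nat.find_spec h).2.1
        have hs3 : E (v (Nat.find h)) (v (Nat.find h + 1)) := (Nat.find_spec h).2.2
        have hmin' : ∀ t, t < Nat.find h → ¬ (p ≤ t ∧ t < q ∧ E (v t) (v (t + 1))) :=
          fun t ht => Nat.find_min h ht
        set m0 := Nat.find h with hm0
        refine ⟨m0, hs1, hs2.le, ?_, ?_⟩
        · intro t ht htm
          have hnd : ¬ (p ≤ t ∧ t < q ∧ E (v t) (v (t + 1))) := hmin' t htm
          have htn : t < n := by omega
          rcases hedge t htn with he | he
          · exact absurd ⟨ht, by omega, he⟩ hnd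
          · exact he
        · intro t ht
          induction t, ht using Nat.le_induction with
          | base => intro _; exact hs3
          | succ t ht ih =>
            intro htq
            have hdt : E (v t) (v (t + 1)) := ih (by omega)
            by_contra hnd
            have he2 : E (v (t + 2)) (v (t + 1)) := by
              rcases hedge (t + 1) (by omega) with he | he
              · exact absurd he hnd
              · exact he
            have hic : IsColl E v (t + 1) := by
              constructor
              · rw [show t + 1 - 1 = t by omega]; exact hdt
              · exact he2
            have hp1 : p < t + 1 := by omega
            exact hnocoll (t + 1) hp1 (by omega) ⟨by omega, hic⟩
      · refine ⟨q, by omega, le_rfl, ?_, ?_⟩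
        · intro t ht htq
          rcases hedge t (by omega) with he | he
          · exact absurd ⟨t, ht, by omega, he⟩ h
          · exact he
        · intro t h1 h2; omega
    obtain ⟨m, hpm, hmq, hdown, hup⟩ := hm
    have hdesc : ∀ dd u, u + dd = m → p ≤ u → Relation.ReflTransGen FF (v m) (v u) := by
      intro dd
      induction dd with
      | zero => intro u hu _; rw [show u = m by omega]
      | succ dd ih =>
        intro u hu hpu
        have h1 : Relation.ReflTransGen FF (v m) (v (u + 1)) := ih (u + 1) (by omega) (by omega)
        refine h1.tail ?_
        refine ⟨hdown u hpu (by omega), u, by omega, Or.inr ⟨rfl, rfl⟩⟩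
    have hasc : ∀ u, m ≤ u → u ≤ q → Relation.ReflTransGen FF (v m) (v u) := by
      intro u hu
      induction u, hu using Nat.le_induction with
      | base => intro _; exact Relation.ReflTransGen.refl
      | succ u hu ih =>
        intro huq
        refine (ih (by omega)).tail ?_
        refine ⟨hup u hu (by omega), u, by omega, Or.inl ⟨rfl, rfl⟩⟩
    exact ⟨v m, hdesc (m - p) p (by omega) le_rfl, hasc q hmq (le_refl q)⟩
  -- now assemble the skeleton
  refine ⟨kk, fun ℓ => v (wpos E v n ℓ), FF, ?_, ?_, ?_, ?_, ?_, ?_, hseg⟩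
  · show v (wpos E v n 0) = i
    rw [show wpos E v n 0 = 0 from rfl, hv0]
  · show v (wpos E v n kk) = j
    rw [hkspec, hvn]
  · intro ℓ h0 hℓ
    obtain ⟨hic, hpos, hltn'⟩ := hcolpos ℓ h0 hℓ
    exact (hcol _ hpos hltn').1 hic
  · exact fun a b hf => hf.1
  · -- sources are not in S
    rintro a b ⟨hEab, t, htn, hor⟩ haS
    rcases hor with ⟨hta, htb⟩ | ⟨htb, hta⟩
    · -- a = v t, b = v (t+1)
      rcases Nat.eq_zero_or_pos t with h0 | h0
      · apply hiS; rw [← hv0, ← h0, hta]; exact haS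
      · have hc : E (v (t - 1)) (v t) ∧ E (v (t + 1)) (v t) := by
          by_contra hnc
          exact (hcol t h0 htn).2 hnc (hta ▸ haS)
        apply hacyc a
        have hba : E b a := by rw [← hta, ← htb]; exact hc.2
        exact Relation.TransGen.head hEab (Relation.TransGen.single hba)
    · -- a = v (t+1), b = v t
      rcases eq_or_lt_of_le (Nat.succ_le_of_lt htn) with hend | hlt
      · apply hjS; rw [← hvn, ← hend, hta]; exact haS
      · have hc : E (v (t + 1 - 1)) (v (t + 1)) ∧ E (v (t + 1 + 1)) (v (t + 1)) := by
          by_contra hnc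
          exact (hcol (t + 1) (by omega) hlt).2 hnc (hta ▸ haS)
        apply hacyc a
        have := hc.1
        rw [show t + 1 - 1 = t by omega] at this
        have hba : E b a := by rw [← hta, ← htb]; exact this
        exact Relation.TransGen.head hEab (Relation.TransGen.single hba)
  · -- S-vertices with in-edges are interior colliders
    rintro a b ⟨hEab, t, htn, hor⟩ hbS
    have hkey : ∀ s, 0 < s → s < n → v s = b → ∃ ℓ, 0 < ℓ ∧ ℓ < kk ∧ v (wpos E v n ℓ) = b := by
      intro s h0 hsn hsb
      have hc : E (v (s - 1)) (v s) ∧ E (v (s + 1)) (v s) := by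
        by_contra hnc
        exact (hcol s h0 hsn).2 hnc (hsb ▸ hbS)
      obtain ⟨ℓ, hℓ0, hℓk, hℓp⟩ := hcover s h0 hsn hc
      exact ⟨ℓ, hℓ0, hℓk, by rw [hℓp, hsb]⟩
    rcases hor with ⟨hta, htb⟩ | ⟨htb, hta⟩
    · -- b = v (t+1)
      rcases eq_or_lt_of_le (Nat.succ_le_of_lt htn) with hend | hlt
      · exfalso; apply hjS; rw [← hvn, ← hend, htb]; exact hbS
      · exact hkey (t + 1) (by omega) hlt htb
    · -- b = v t
      rcases Nat.eq_zero_or_pos t with h0 | h0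
      · exfalso; apply hiS; rw [← hv0, ← h0, htb]; exact hbS
      · exact hkey t h0 htn htb

end Stmt10Aux3

/-- if `i` and `j` are d-connected given `S` in a DAG `G`, then there are
`Λ ∈ ℝ^E` and error variances all equal to `1` such that the induced covariance matrix
`Σ = (I-Λ)^{-T} diag(ω) (I-Λ)^{-1}` has `det Σ_{{i}∪S, {j}∪S} ≠ 0`; i.e., d-separation is
complete even under the full equal variance assumption.  (Rows `{i}∪S` and columns
`{j}∪S` are indexed by `Option S`, `none` standing for `i`, resp. `j`.) -/

theorem stmt10 {V : Type*} [Fintype V] [DecidableEq V]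
    (E : V → V → Prop) (hacyc : ∀ i, ¬ Relation.TransGen E i i)
    (S : Finset V) (i j : V) (hij : i ≠ j) (hiS : i ∉ S) (hjS : j ∉ S)
    (hconn : DConnected E S i j) :
    ∃ (Λ : Matrix V V ℝ) (ω : V → ℝ),
      (∀ a b, ¬ E a b → Λ a b = 0) ∧ (∀ k, ω k = 1) ∧
      Matrix.det (Matrix.of fun a b : Option S =>
        (((1 - Λ)ᵀ)⁻¹ * Matrix.diagonal ω * (1 - Λ)⁻¹ : Matrix V V ℝ)
          (a.elim i (fun s => (s : V))) (b.elim j (fun s => (s : V)))) ≠ 0 := by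
  classical
  obtain ⟨n, v, hn, hv0, hvn, hedge, hcol⟩ := hconn
  obtain ⟨k0, x0, F0, p1, p2, p3, p4, p5, p6, p7⟩ :=
    Stmt10Aux3.skel_of_walk hacyc hiS hjS hn hv0 hvn hedge hcol
  have hex : ∃ k, Stmt10Aux2.SkelAt E S i j k :=
    ⟨k0, x0, F0, p1, p2, p3, p4, p5, p6, p7⟩
  obtain ⟨k, x, F, hk, hx0, hxk, hxS, hFE, hH1, hH2, hA, hdist, hB⟩ :=
    Stmt10Aux2.exists_good_skel hij hiS hjS hex
  clear p1 p2 p3 p4 p5 p6 p7 hex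
  refine ⟨Stmt10Aux.lam F, fun _ => 1, ?_, fun _ => rfl, ?_⟩
  · intro a b hnE
    simp only [Stmt10Aux.lam, Matrix.of_apply]
    rw [if_neg (fun hF => hnE (hFE a b hF))]
  · -- the determinant is nonzero
    have hinv : (1 - Stmt10Aux.lam F)⁻¹ = Stmt10Aux.NN F :=
      Stmt10Aux.inv_one_sub_lam hacyc hFE
    have hentry : ∀ u w : V,
        ((((1 - Stmt10Aux.lam F)ᵀ)⁻¹ * Matrix.diagonal (fun _ : V => (1 : ℝ)) *
          (1 - Stmt10Aux.lam F)⁻¹ : Matrix V V ℝ)) u w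
          = ∑ c, Stmt10Aux.NN F c u * Stmt10Aux.NN F c w := by
      intro u w
      rw [Matrix.diagonal_one, Matrix.mul_one, ← Matrix.transpose_nonsing_inv, hinv,
        Matrix.mul_apply]
      simp only [Matrix.transpose_apply]
    intro hdet
    obtain ⟨g, hg0, hg⟩ := Matrix.exists_mulVec_eq_zero_iff.mpr hdet
    have hrow : ∀ a : Option S,
        ∑ b : Option S, (∑ c, Stmt10Aux.NN F c (a.elim i (fun s => (s : V))) *
          Stmt10Aux.NN F c (b.elim j (fun s => (s : V)))) * g b = 0 := by
      intro a
      have h1 := congrFun hg a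
      simp only [Matrix.mulVec, dotProduct, Matrix.of_apply, Pi.zero_apply] at h1
      rw [← h1]
      refine Finset.sum_congr rfl fun b _ => ?_
      rw [hentry]
    -- rows and columns indexed by off-path elements of S
    have hMs : ∀ s : V, s ∈ S → (¬ ∃ ℓ, 0 < ℓ ∧ ℓ < k ∧ x ℓ = s) →
        ∀ z : V, (∑ c, Stmt10Aux.NN F c s * Stmt10Aux.NN F c z) = if s = z then 1 else 0 := by
      intro s hsS hnk z
      have hnoout : ∀ c, ¬ F s c := fun c hc => hH1 s c hc hsS
      have hnoin : ∀ c, ¬ F c s := fun c hc => hnk (hH2 c s hc hsS)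
      rw [Finset.sum_eq_single_of_mem s (Finset.mem_univ s)]
      · rw [Stmt10Aux.NN_diag hacyc hFE, one_mul, Stmt10Aux.NN_sink hnoout]
      · intro c _ hcs
        rw [Stmt10Aux.NN_noin hnoin hcs, zero_mul]
    have hoff : ∀ s : {y // y ∈ S}, (¬ ∃ ℓ, 0 < ℓ ∧ ℓ < k ∧ x ℓ = (s : V)) →
        g (some s) = 0 := by
      intro s hnk
      have hr := hrow (some s)
      have hside : ∀ b ∈ (Finset.univ : Finset (Option S)), b ≠ some s →
          (∑ c, Stmt10Aux.NN F c ((some s : Option S).elim i (fun s => (s : V))) *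
            Stmt10Aux.NN F c (b.elim j (fun s => (s : V)))) * g b = 0 := by
        intro b _ hbs
        simp only [Option.elim_some]
        rw [hMs (s : V) s.2 hnk]
        rcases b with _ | s'
        · simp only [Option.elim_none]
          exact mul_eq_zero_of_left (if_neg (fun he : (s : V) = j => hjS (by rw [← he]; exact s.2))) _
        · simp only [Option.elim_some]
          exact mul_eq_zero_of_left (if_neg (fun he : (s : V) = s' => hbs (congrArg some (Subtype.ext he.symm)))) _
      rw [Finset.sum_eq_single_of_mem (some s) (Finset.mem_univ _) hside] at hr
      simp only [Option.elim_some] at hr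
      rw [hMs (s : V) s.2 hnk, if_pos rfl, one_mul] at hr
      exact hr
    -- the column indices corresponding to x 1, ..., x k
    set colIdx : ℕ → Option S :=
      fun r => if h : 0 < r ∧ r < k then some ⟨x r, hxS r h.1 h.2⟩ else none with hcolIdx
    have hcval : ∀ r, 0 < r → r ≤ k → (colIdx r).elim j (fun s => (s : V)) = x r := by
      intro r hr0 hrk
      by_cases h : 0 < r ∧ r < k
      · simp only [hcolIdx]
        rw [dif_pos h]
        rfl
      · have hre : r = k := by omega
        simp only [hcolIdx]
        rw [dif_neg h]
        simp only [Option.elim_none]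
        rw [hre, hxk]
    have hcl : ∀ r, 0 < r → r ≤ k → g (colIdx r) = 0 := by
      intro r
      induction r using Nat.strong_induction_on with
      | _ r ih =>
        intro hr0 hrk
        set a : Option S :=
          if h : 0 < r - 1 ∧ r - 1 < k then some ⟨x (r - 1), hxS _ h.1 h.2⟩ else none with ha
        have hrowv : a.elim i (fun s => (s : V)) = x (r - 1) := by
          by_cases h : 0 < r - 1 ∧ r - 1 < k
          · simp only [ha]
            rw [dif_pos h]
            rfl
          · have h1 : r - 1 = 0 := by omega
            simp only [ha]
            rw [dif_neg h]
            simp only [Option.elim_none]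
            rw [h1, hx0]
        have hr := hrow a
        rw [hrowv] at hr
        have hside : ∀ b ∈ (Finset.univ : Finset (Option S)), b ≠ colIdx r →
            (∑ c, Stmt10Aux.NN F c (x (r - 1)) *
              Stmt10Aux.NN F c (b.elim j (fun s => (s : V)))) * g b = 0 := by
          intro b _ hbne
          rcases b with _ | s
          · -- b = none, the column j = x k
            have hrk' : r < k := by
              rcases eq_or_lt_of_le hrk with he | h
              · exfalso
                apply hbne
                simp only [hcolIdx]
                rw [dif_neg (by omega)]
              · exact h
            simp only [Option.elim_none]
            rw [← hxk, Stmt10Aux.M_zero (hB (r - 1) k (by omega) le_rfl), zero_mul]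
          · by_cases hker : ∃ c, 0 < c ∧ c < k ∧ x c = (s : V)
            · obtain ⟨c, hc0, hck, hxc⟩ := hker
              rcases lt_trichotomy c r with hlt | heq | hgt
              · have hci : colIdx c = some s := by
                  simp only [hcolIdx]
                  rw [dif_pos ⟨hc0, hck⟩]
                  exact congrArg some (Subtype.ext hxc)
                have hgz := ih c hlt hc0 (by omega)
                rw [hci] at hgz
                rw [hgz, mul_zero]
              · exfalso
                apply hbne
                simp only [hcolIdx]
                rw [dif_pos (heq ▸ ⟨hc0, hck⟩ : 0 < r ∧ r < k)]
                exact (congrArg some (Subtype.ext (heq ▸ hxc))).symm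
              · simp only [Option.elim_some]
                rw [← hxc, Stmt10Aux.M_zero (hB (r - 1) c (by omega) (by omega)), zero_mul]
            · rw [hoff s hker, mul_zero]
        rw [Finset.sum_eq_single_of_mem (colIdx r) (Finset.mem_univ _) hside] at hr
        rw [hcval r hr0 hrk] at hr
        have hpos : 0 < ∑ c, Stmt10Aux.NN F c (x (r - 1)) * Stmt10Aux.NN F c (x r) := by
          have hw := hA (r - 1) (by omega)
          rw [show r - 1 + 1 = r by omega] at hw
          exact Stmt10Aux.M_pos hacyc hFE hw
        rcases mul_eq_zero.mp hr with h | h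
        · exact absurd h (ne_of_gt hpos)
        · exact h
    apply hg0
    funext b
    simp only [Pi.zero_apply]
    rcases b with _ | s
    · have h1 := hcl k hk le_rfl
      have h2 : colIdx k = none := by
        simp only [hcolIdx]
        rw [dif_neg (by omega)]
      rw [h2] at h1
      exact h1
    · by_cases hker : ∃ c, 0 < c ∧ c < k ∧ x c = (s : V)
      · obtain ⟨c, hc0, hck, hxc⟩ := hker
        have h2 : colIdx c = some s := by
          simp only [hcolIdx]
          rw [dif_pos ⟨hc0, hck⟩]
          exact congrArg some (Subtype.ext hxc)
        have h1 := hcl c hc0 (by omega)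
        rw [h2] at h1
        exact h1
      · exact hoff s hker
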